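/- arXiv:1910.02643 — 4 statements merged into one kernel-verified Lean document; each statement's English description precedes it below -/
import Mathlib

section
/- Sobolev inequality with shift (Lemma 3.6, Lipschitz form): Let N > 2, 1 ≤ p < N, p* = Np/(N−p), 0 < ν < 1 and 0 < r < R. Let Ω be a bounded open subset of ℝ^N with Ω ⊆ B_r(0), and suppose S > 0 is such that (∫_{ℝ^N} |w|^{p*} dx)^{1/p*} ≤ S (∫_{ℝ^N} |∇w|^p dx)^{1/p} for every Lipschitz w : ℝ^N → ℝ with compact support. Let v : ℝ^N → [0,∞) be Lipschitz with v = 0 on ℝ^N∖Ω, and for ε > 0 set φ_ε = (ε + v)^ν. Then for every ε > 0: (∫_Ω φ_ε^{p*} dx)^{1/p*} ≤ S (A(ε) + ∫_Ω |∇φ_ε|^p dx)^{1/p}, where A(ε) = ε^{pν} |B_R(0)∖B_r(0)| / (R−r)^p; in particular lim_{ε→0} A(ε) = 0. -/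
set_option maxHeartbeats 1600000

open MeasureTheory Filter
open scoped ENNReal Topology

section Aux

open Metric

/-- A Lipschitz function vanishing on a set has zero derivative a.e. on that set. -/
lemma aux_fderiv_ae_zero {N : ℕ} (hN : 0 < N) {c : NNReal} {f : EuclideanSpace ℝ (Fin N) → ℝ}
    (hf : LipschitzWith c f) {s : Set (EuclideanSpace ℝ (Fin N))} (hs : MeasurableSet s)
    (h0 : ∀ x ∈ s, f x = 0) :
    ∀ᵐ x ∂(volume.restrict s), HasFDerivAt f (0 : EuclideanSpace ℝ (Fin N) →L[ℝ] ℝ) x := by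
  haveI : Nonempty (Fin N) := ⟨⟨0, hN⟩⟩
  have hdiff : ∀ᵐ x ∂(volume.restrict s), DifferentiableAt ℝ f x :=
    ae_restrict_of_ae hf.ae_differentiableAt
  have hdens := Besicovitch.ae_tendsto_measure_inter_div
    (volume : Measure (EuclideanSpace ℝ (Fin N))) s
  filter_upwards [hdiff, hdens, ae_restrict_mem hs] with x hdx hdens hxs
  set L := fderiv ℝ f x with hLdef
  have hL : HasFDerivAt f L x := hdx.hasFDerivAt
  rcases eq_or_ne L 0 with h | h
  · rwa [h] at hL
  exfalso
  have hLpos : 0 < ‖L‖ := norm_pos_iff.2 h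
  obtain ⟨u0, hu0, hu0'⟩ := L.exists_lt_apply_of_lt_opNorm (show ‖L‖/2 < ‖L‖ by linarith)
  obtain ⟨u, hu, hu'⟩ : ∃ u, ‖u‖ < 1 ∧ ‖L‖/2 < L u := by
    rcases le_or_gt 0 (L u0) with h' | h'
    · exact ⟨u0, hu0, by rwa [Real.norm_eq_abs, abs_of_nonneg h'] at hu0'⟩
    · refine ⟨-u0, by simpa using hu0, ?_⟩
      rw [map_neg]
      rwa [Real.norm_eq_abs, abs_of_neg h'] at hu0'
  have hev : ∀ᶠ y in 𝓝 x, ‖f y - f x - L (y - x)‖ ≤ ‖L‖/16 * ‖y - x‖ :=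
    hL.isLittleO.def (by positivity)
  rw [Metric.eventually_nhds_iff] at hev
  obtain ⟨δ, hδ0, hδ⟩ := hev
  set θ : ℝ≥0∞ := ENNReal.ofReal ((1/5 : ℝ)^N) with hθdef
  have hθ0 : θ ≠ 0 := by
    simp only [hθdef, ne_eq, ENNReal.ofReal_eq_zero, not_le]
    positivity
  have hratio : ∀ᶠ ρ in 𝓝[>] (0:ℝ),
      1 - θ < volume (s ∩ closedBall x ρ) / volume (closedBall x ρ) :=
    hdens.eventually_const_lt (ENNReal.sub_lt_self ENNReal.one_ne_top one_ne_zero hθ0)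
  have hmap : Tendsto (fun t : ℝ => 5/4*t) (𝓝[>] (0:ℝ)) (𝓝[>] (0:ℝ)) := by
    rw [tendsto_nhdsWithin_iff]
    constructor
    · have : Tendsto (fun t : ℝ => 5/4*t) (𝓝 0) (𝓝 (5/4*0)) :=
        (tendsto_id.const_mul _)
      simpa using this.mono_left nhdsWithin_le_nhds
    · filter_upwards [self_mem_nhdsWithin] with t ht
      have : (0:ℝ) < t := ht
      simpa using by positivity
  have heventt := hmap.eventually hratio
  have hIoo : Set.Ioo (0:ℝ) (4/5*δ) ∈ 𝓝[>] (0:ℝ) :=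
    Ioo_mem_nhdsGT_of_mem ⟨le_rfl, by linarith⟩
  obtain ⟨t, hratio_t, ht0, htδ⟩ := (heventt.and hIoo).exists
  have hclaim : ∃ y ∈ s, ‖y - x - t • u‖ < t/4 := by
    by_contra h'
    push_neg at h'
    set B := closedBall x (5/4*t) with hBdef
    set Bs := ball (x + t • u) (t/4) with hBsdef
    have htu : ‖t • u‖ ≤ t := by
      rw [norm_smul, Real.norm_eq_abs, abs_of_pos ht0]
      nlinarith [norm_nonneg u]
    have hsub : Bs ⊆ B := by
      intro z hz
      rw [mem_ball] at hz
      rw [mem_closedBall, dist_eq_norm]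
      calc ‖z - x‖ = ‖(z - (x + t • u)) + t • u‖ := by congr 1; abel
        _ ≤ ‖z - (x + t • u)‖ + ‖t • u‖ := norm_add_le _ _
        _ ≤ t/4 + t := by
            rw [dist_eq_norm] at hz
            exact add_le_add hz.le htu
        _ ≤ 5/4*t := by linarith
    have hdisj : s ∩ B ⊆ B \ Bs := by
      rintro y ⟨hys, hyB⟩
      refine ⟨hyB, ?_⟩
      rw [hBsdef, mem_ball, dist_eq_norm]
      have : y - (x + t • u) = y - x - t • u := by abel
      rw [this]
      exact not_lt.2 (h' y hys)
    have hμBs : volume Bs = θ * volume B := by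
      rw [hBsdef, hBdef, Measure.addHaar_ball _ _ (by positivity),
        Measure.addHaar_closedBall _ _ (by positivity), finrank_euclideanSpace_fin, hθdef,
        ← mul_assoc, ← ENNReal.ofReal_mul (by positivity), ← mul_pow]
      have h14 : (1/5 : ℝ) * (5/4*t) = t/4 := by ring
      rw [h14]
    have hμB0 : volume B ≠ 0 := (measure_closedBall_pos _ _ (by positivity)).ne'
    have hμBt : volume B ≠ ⊤ := measure_closedBall_lt_top.ne
    have hle : volume (s ∩ B) ≤ (1 - θ) * volume B := by
      calc volume (s ∩ B) ≤ volume (B \ Bs) := measure_mono hdisj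
        _ = volume B - volume Bs :=
            measure_diff hsub measurableSet_ball.nullMeasurableSet measure_ball_lt_top.ne
        _ = (1 - θ) * volume B := by
            rw [hμBs, ENNReal.sub_mul (fun _ _ => hμBt), one_mul]
    have hgt : (1 - θ) * volume B < volume (s ∩ B) := by
      rw [← ENNReal.lt_div_iff_mul_lt (Or.inl hμB0) (Or.inl hμBt)]
      exact hratio_t
    exact absurd hle (not_le.2 hgt)
  obtain ⟨y, hy, hynorm⟩ := hclaim
  have hyx : ‖y - x‖ ≤ 5/4 * t := by
    calc ‖y - x‖ = ‖(y - x - t • u) + t • u‖ := by congr 1; abel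
      _ ≤ ‖y - x - t • u‖ + ‖t • u‖ := norm_add_le _ _
      _ ≤ t/4 + t := by
          rw [norm_smul, Real.norm_eq_abs, abs_of_pos ht0]
          have : t * ‖u‖ ≤ t := by nlinarith [norm_nonneg u]
          linarith [hynorm.le]
      _ ≤ 5/4 * t := by linarith
  have hdyx : dist y x < δ := by
    rw [dist_eq_norm]
    calc ‖y - x‖ ≤ 5/4*t := hyx
      _ < δ := by linarith
  have hest := hδ hdyx
  rw [h0 y hy, h0 x hxs, sub_zero, zero_sub, norm_neg, Real.norm_eq_abs] at hest
  have hLyx : L (y - x) = L (y - x - t • u) + t * L u := by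
    have h' : y - x = (y - x - t • u) + t • u := by abel
    rw [← smul_eq_mul, ← L.map_smul, ← L.map_add, ← h']
  have h1 : |L (y - x - t • u)| ≤ ‖L‖ * (t/4) := by
    have h1a := L.le_opNorm (y - x - t • u)
    rw [Real.norm_eq_abs] at h1a
    have h1b : ‖L‖ * ‖y - x - t • u‖ ≤ ‖L‖ * (t/4) :=
      mul_le_mul_of_nonneg_left hynorm.le (norm_nonneg L)
    linarith
  have h2 : t * (‖L‖/2) < t * L u := by nlinarith
  have h3 : |L (y - x)| ≤ ‖L‖/16 * (5/4*t) := by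
    calc |L (y - x)| ≤ ‖L‖/16 * ‖y - x‖ := hest
      _ ≤ ‖L‖/16 * (5/4*t) := by nlinarith
  rw [hLyx] at h3
  have h4 := abs_le.1 h3
  have h5 := abs_le.1 h1
  nlinarith

/-- `t ↦ (ε + max t 0)^ν` is Lipschitz. -/
lemma aux_g_lip {ε ν : ℝ} (hε : 0 < ε) (hν1 : 0 < ν) (hν2 : ν < 1) :
    LipschitzWith (Real.toNNReal (ν * ε ^ (ν-1))) (fun t : ℝ => (ε + max t 0) ^ ν) := by
  have h1 : LipschitzOnWith (Real.toNNReal (ν * ε ^ (ν-1))) (fun t : ℝ => t ^ ν)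
      (Set.Ici ε) := by
    apply (convex_Ici ε).lipschitzOnWith_of_nnnorm_hasDerivWithin_le
      (f' := fun t => ν * t ^ (ν - 1))
    · intro x hx
      have hx0 : x ≠ 0 := ne_of_gt (lt_of_lt_of_le hε hx)
      exact (Real.hasDerivAt_rpow_const (Or.inl hx0)).hasDerivWithinAt
    · intro x hx
      have hεx : ε ≤ x := hx
      have hb : x ^ (ν - 1) ≤ ε ^ (ν - 1) :=
        Real.rpow_le_rpow_of_nonpos hε hεx (by linarith)
      have hnn : (0:ℝ) ≤ ν * ε ^ (ν-1) := mul_nonneg hν1.le (Real.rpow_nonneg hε.le _)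
      rw [← NNReal.coe_le_coe, coe_nnnorm, Real.norm_eq_abs, Real.coe_toNNReal _ hnn,
        abs_of_nonneg (mul_nonneg hν1.le (Real.rpow_nonneg (le_trans hε.le hεx) _))]
      exact mul_le_mul_of_nonneg_left hb hν1.le
  have h2 : LipschitzWith 1 (fun t : ℝ => ε + max t 0) := by
    apply LipschitzWith.of_dist_le_mul
    intro a b
    have := (LipschitzWith.id.max_const (0:ℝ)).dist_le_mul a b
    simp only [Real.dist_eq, NNReal.coe_one, one_mul, id] at this ⊢
    calc |ε + max a 0 - (ε + max b 0)| = |max a 0 - max b 0| := by ring_nf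
      _ ≤ |a - b| := this
  have hmaps : Set.MapsTo (fun t : ℝ => ε + max t 0) Set.univ (Set.Ici ε) := by
    intro t _
    simp only [Set.mem_Ici, le_add_iff_nonneg_right, le_max_right]
  have h3 := h1.comp (LipschitzWith.lipschitzOnWith h2 (s := Set.univ)) hmaps
  rw [lipschitzOnWith_univ] at h3
  simpa [mul_one, Function.comp_def] using h3

end Aux

/-- Sobolev inequality with shift (Lemma 3.6, Lipschitz form). -/
theorem stmt_7
    (N : ℕ) (p pstar ν r R S : ℝ)
    (hN : 2 < N) (hp1 : 1 ≤ p) (hp2 : p < N)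
    (hpstar : pstar = (N : ℝ) * p / ((N : ℝ) - p))
    (hν1 : 0 < ν) (hν2 : ν < 1) (hr : 0 < r) (hrR : r < R) (hS : 0 < S)
    (Ω : Set (EuclideanSpace ℝ (Fin N))) (hΩo : IsOpen Ω)
    (hΩb : Bornology.IsBounded Ω)
    (hΩr : Ω ⊆ Metric.ball (0 : EuclideanSpace ℝ (Fin N)) r)
    -- the Sobolev inequality with constant S
    (hSob : ∀ w : EuclideanSpace ℝ (Fin N) → ℝ, (∃ c, LipschitzWith c w) →
        HasCompactSupport w →
        (∫ x, |w x| ^ pstar) ^ (1 / pstar) ≤ S * (∫ x, ‖gradient w x‖ ^ p) ^ (1 / p))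
    (v : EuclideanSpace ℝ (Fin N) → ℝ) (hv : ∃ c, LipschitzWith c v)
    (hv0 : ∀ x, 0 ≤ v x) (hvΩ : ∀ x, x ∉ Ω → v x = 0) :
    (∀ ε : ℝ, 0 < ε →
      (∫ x in Ω, ((ε + v x) ^ ν) ^ pstar) ^ (1 / pstar) ≤
        S * ((ε ^ (p * ν) *
                (volume (Metric.ball (0 : EuclideanSpace ℝ (Fin N)) R \
                  Metric.ball (0 : EuclideanSpace ℝ (Fin N)) r)).toReal / (R - r) ^ p)
              + ∫ x in Ω, ‖gradient (fun y => (ε + v y) ^ ν) x‖ ^ p) ^ (1 / p)) ∧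
    Tendsto
      (fun ε : ℝ => ε ^ (p * ν) *
          (volume (Metric.ball (0 : EuclideanSpace ℝ (Fin N)) R \
            Metric.ball (0 : EuclideanSpace ℝ (Fin N)) r)).toReal / (R - r) ^ p)
      (𝓝[>] 0) (𝓝 0) := by
  have hN0 : 0 < N := by omega
  haveI : Nonempty (Fin N) := ⟨⟨0, hN0⟩⟩
  have hp0 : (0:ℝ) < p := lt_of_lt_of_le one_pos hp1
  have hNR : (2:ℝ) < (N:ℝ) := by exact_mod_cast hN
  have hNp : (0:ℝ) < (N:ℝ) - p := by linarith
  have hps0 : 0 < pstar := by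
    rw [hpstar]
    positivity
  have hRr : (0:ℝ) < R - r := by linarith
  constructor
  · intro ε hε
    obtain ⟨cv, hcv⟩ := hv
    have hcv0 : (0:ℝ) ≤ cv := cv.coe_nonneg
    set φ : EuclideanSpace ℝ (Fin N) → ℝ := fun y => (ε + v y) ^ ν with hφdef
    have hgl := aux_g_lip hε hν1 hν2
    have hφlip : LipschitzWith (Real.toNNReal (ν * ε ^ (ν-1)) * cv) φ := by
      have h := hgl.comp hcv
      have heq : φ = (fun t : ℝ => (ε + max t 0) ^ ν) ∘ v := by
        funext y
        simp [hφdef, max_eq_left (hv0 y)]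
      rw [heq]; exact h
    set cφ := Real.toNNReal (ν * ε ^ (ν-1)) * cv with hcφdef
    have hφ0 : ∀ x, 0 ≤ φ x := fun x => Real.rpow_nonneg (by linarith [hv0 x]) _
    set ψ : EuclideanSpace ℝ (Fin N) → ℝ := fun y => φ y - ε ^ ν with hψdef
    have hψlip : LipschitzWith cφ ψ := by
      apply LipschitzWith.of_dist_le_mul
      intro a b
      have h := hφlip.dist_le_mul a b
      simpa [hψdef, Real.dist_eq, sub_sub_sub_cancel_right] using h
    have hψ0' : ∀ x ∈ Ωᶜ, ψ x = 0 := by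
      intro x hx
      simp [hψdef, hφdef, hvΩ x hx]
    have hψae : ∀ᵐ x : EuclideanSpace ℝ (Fin N), x ∈ Ωᶜ →
        HasFDerivAt ψ (0 : EuclideanSpace ℝ (Fin N) →L[ℝ] ℝ) x :=
      (ae_restrict_iff' hΩo.measurableSet.compl).1
        (aux_fderiv_ae_zero hN0 hψlip hΩo.measurableSet.compl hψ0')
    -- the cutoff function
    set η : EuclideanSpace ℝ (Fin N) → ℝ :=
      fun x => max 0 (min 1 ((R - ‖x‖)/(R-r))) with hηdef
    have hη1 : ∀ x : EuclideanSpace ℝ (Fin N), ‖x‖ ≤ r → η x = 1 := by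
      intro x hx
      have h1 : (1:ℝ) ≤ (R - ‖x‖)/(R-r) := by
        rw [le_div_iff₀ hRr]; linarith
      simp [hηdef, min_eq_left h1]
    have hη0 : ∀ x : EuclideanSpace ℝ (Fin N), R ≤ ‖x‖ → η x = 0 := by
      intro x hx
      have h1 : (R - ‖x‖)/(R-r) ≤ 0 := div_nonpos_of_nonpos_of_nonneg (by linarith) hRr.le
      simp only [hηdef]
      rw [min_eq_right (le_trans h1 zero_le_one), max_eq_left h1]
    have hηmem : ∀ x : EuclideanSpace ℝ (Fin N), 0 ≤ η x ∧ η x ≤ 1 := by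
      intro x
      exact ⟨le_max_left _ _, max_le zero_le_one (min_le_left _ _)⟩
    have hηlip : LipschitzWith (Real.toNNReal (R-r)⁻¹) η := by
      apply LipschitzWith.of_dist_le_mul
      intro a b
      have hnorm : |‖a‖ - ‖b‖| ≤ dist a b := by
        rw [dist_eq_norm]; exact abs_norm_sub_norm_le a b
      rw [Real.dist_eq, Real.coe_toNNReal _ (inv_nonneg.2 hRr.le)]
      simp only [hηdef]
      have h1 : |max 0 (min 1 ((R - ‖a‖)/(R-r))) - max 0 (min 1 ((R - ‖b‖)/(R-r)))| ≤
          |min 1 ((R - ‖a‖)/(R-r)) - min 1 ((R - ‖b‖)/(R-r))| := by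
        rw [max_comm 0 (min 1 ((R - ‖a‖)/(R-r))), max_comm 0 (min 1 ((R - ‖b‖)/(R-r)))]
        exact abs_max_sub_max_le_abs _ _ _
      have h2 : |min 1 ((R - ‖a‖)/(R-r)) - min 1 ((R - ‖b‖)/(R-r))| ≤
          |(R - ‖a‖)/(R-r) - (R - ‖b‖)/(R-r)| := by
        have := abs_min_sub_min_le_max (1:ℝ) ((R - ‖a‖)/(R-r)) 1 ((R - ‖b‖)/(R-r))
        simpa using this
      have h3 : |(R - ‖a‖)/(R-r) - (R - ‖b‖)/(R-r)| = |‖a‖ - ‖b‖| * (R-r)⁻¹ := by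
        rw [div_sub_div_same]
        have : R - ‖a‖ - (R - ‖b‖) = -(‖a‖ - ‖b‖) := by ring
        rw [this, div_eq_mul_inv, abs_mul, abs_neg, abs_of_nonneg (inv_nonneg.2 hRr.le)]
      calc |max 0 (min 1 ((R - ‖a‖)/(R-r))) - max 0 (min 1 ((R - ‖b‖)/(R-r)))|
          ≤ |‖a‖ - ‖b‖| * (R-r)⁻¹ := by rw [← h3]; exact h1.trans h2
        _ ≤ dist a b * (R-r)⁻¹ := by
            exact mul_le_mul_of_nonneg_right hnorm (inv_nonneg.2 hRr.le)
        _ = (R-r)⁻¹ * dist a b := mul_comm _ _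
    -- bound on v and φ
    set e : EuclideanSpace ℝ (Fin N) := EuclideanSpace.single ⟨0, hN0⟩ (1:ℝ) with hedef
    have he : ‖e‖ = 1 := by rw [hedef, EuclideanSpace.norm_single]; simp
    have hvub : ∀ x, v x ≤ 2*r*cv := by
      intro x
      by_cases hx : x ∈ Ω
      · have hxr : ‖x‖ < r := by
          have h := hΩr hx
          rwa [Metric.mem_ball, dist_zero_right] at h
        set y := x + (2*r) • e with hydef
        have hny : ‖(2*r) • e‖ = 2*r := by
          rw [norm_smul, he, Real.norm_eq_abs, abs_of_pos (by positivity), mul_one]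
        have hyn : r < ‖y‖ := by
          have habs := abs_norm_sub_norm_le y ((2*r) • e)
          have h0 : y - (2*r) • e = x := by rw [hydef]; abel
          rw [h0, hny] at habs
          have h1 := (abs_le.1 habs).1
          linarith
        have hyΩ : y ∉ Ω := by
          intro hyy
          have h := hΩr hyy
          rw [Metric.mem_ball, dist_zero_right] at h
          linarith
        have hd := hcv.dist_le_mul x y
        rw [Real.dist_eq, hvΩ y hyΩ, sub_zero] at hd
        have hdxy : dist x y = 2*r := by
          rw [dist_eq_norm, hydef]
          have h0 : x - (x + (2*r) • e) = -((2*r) • e) := by abel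
          rw [h0, norm_neg, hny]
        rw [hdxy] at hd
        calc v x ≤ |v x| := le_abs_self _
          _ ≤ cv * (2*r) := hd
          _ = 2*r*cv := by ring
      · rw [hvΩ x hx]; positivity
    set Bφ : ℝ := (ε + 2*r*cv) ^ ν with hBφdef
    have hBφ0 : 0 ≤ Bφ := Real.rpow_nonneg (by positivity) _
    have hφub : ∀ x, φ x ≤ Bφ := by
      intro x
      exact Real.rpow_le_rpow (by linarith [hv0 x]) (by linarith [hvub x]) hν1.le
    -- the test function w
    set w : EuclideanSpace ℝ (Fin N) → ℝ := fun x => η x * φ x with hwdef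
    have hcw0 : (0:ℝ) ≤ ↑cφ + Bφ * (R-r)⁻¹ :=
      add_nonneg cφ.coe_nonneg (mul_nonneg hBφ0 (inv_nonneg.2 hRr.le))
    have hwlip : LipschitzWith (Real.toNNReal (↑cφ + Bφ * (R-r)⁻¹)) w := by
      apply LipschitzWith.of_dist_le_mul
      intro a b
      have hφd := hφlip.dist_le_mul a b
      have hηd := hηlip.dist_le_mul a b
      rw [Real.dist_eq] at hφd hηd
      rw [Real.coe_toNNReal _ (inv_nonneg.2 hRr.le)] at hηd
      rw [Real.dist_eq, Real.coe_toNNReal _ hcw0]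
      simp only [hwdef]
      have e1 : |η a| ≤ 1 := by rw [abs_of_nonneg (hηmem a).1]; exact (hηmem a).2
      have e2 : |φ b| ≤ Bφ := by rw [abs_of_nonneg (hφ0 b)]; exact hφub b
      have d0 : (0:ℝ) ≤ dist a b := dist_nonneg
      calc |η a * φ a - η b * φ b| = |η a * (φ a - φ b) + φ b * (η a - η b)| := by ring_nf
        _ ≤ |η a * (φ a - φ b)| + |φ b * (η a - η b)| := abs_add_le _ _
        _ = |η a| * |φ a - φ b| + |φ b| * |η a - η b| := by rw [abs_mul, abs_mul]
        _ ≤ 1 * (↑cφ * dist a b) + Bφ * ((R-r)⁻¹ * dist a b) := by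
            have t1 : |η a| * |φ a - φ b| ≤ 1 * (↑cφ * dist a b) := by
              apply mul_le_mul e1 hφd (abs_nonneg _) zero_le_one
            have t2 : |φ b| * |η a - η b| ≤ Bφ * ((R-r)⁻¹ * dist a b) := by
              apply mul_le_mul e2 hηd (abs_nonneg _) hBφ0
            linarith
        _ = (↑cφ + Bφ * (R-r)⁻¹) * dist a b := by ring
    have hwcs : HasCompactSupport w := by
      apply HasCompactSupport.intro (isCompact_closedBall (0 : EuclideanSpace ℝ (Fin N)) R)
      intro x hx
      simp only [Metric.mem_closedBall, dist_zero_right, not_le] at hx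
      simp only [hwdef]
      rw [hη0 x hx.le, zero_mul]
    have key := hSob w ⟨_, hwlip⟩ hwcs
    -- LHS comparison
    have hwcont : Continuous w := hwlip.continuous
    have hint1 : Integrable (fun x => |w x| ^ pstar) := by
      apply Continuous.integrable_of_hasCompactSupport
      · exact hwcont.abs.rpow_const (fun x => Or.inr hps0.le)
      · have h := hwcs.comp_left (g := fun t : ℝ => |t| ^ pstar)
          (by simp [Real.zero_rpow hps0.ne'])
        exact h
    have hΩm := hΩo.measurableSet
    have hLle : (∫ x in Ω, ((ε + v x) ^ ν) ^ pstar) ≤ ∫ x, |w x| ^ pstar := by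
      have heq : ∫ x in Ω, ((ε + v x) ^ ν) ^ pstar = ∫ x in Ω, |w x| ^ pstar := by
        apply setIntegral_congr_fun hΩm
        intro x hx
        show ((ε + v x) ^ ν) ^ pstar = |w x| ^ pstar
        have hxr : ‖x‖ < r := by
          have h := hΩr hx
          rwa [Metric.mem_ball, dist_zero_right] at h
        have hwx : w x = φ x := by
          simp only [hwdef]
          rw [hη1 x hxr.le, one_mul]
        rw [hwx, abs_of_nonneg (hφ0 x)]
      rw [heq]
      exact setIntegral_le_integral hint1 (Eventually.of_forall fun x => by positivity)
    have hLHS : (∫ x in Ω, ((ε + v x) ^ ν) ^ pstar) ^ (1/pstar) ≤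
        (∫ x, |w x| ^ pstar) ^ (1/pstar) := by
      apply Real.rpow_le_rpow (setIntegral_nonneg hΩm
        (fun x _ => Real.rpow_nonneg (Real.rpow_nonneg (by linarith [hv0 x]) _) _)) hLle
        (one_div_nonneg.2 hps0.le)
    -- gradient norms vs fderiv norms
    have hgradnorm : ∀ (f : EuclideanSpace ℝ (Fin N) → ℝ) (x : EuclideanSpace ℝ (Fin N)),
        ‖gradient f x‖ = ‖fderiv ℝ f x‖ := fun f x =>
      LinearIsometryEquiv.norm_map
        (InnerProductSpace.toDual ℝ (EuclideanSpace ℝ (Fin N))).symm (fderiv ℝ f x)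
    -- the annulus
    set Ann : Set (EuclideanSpace ℝ (Fin N)) :=
      Metric.ball 0 R \ Metric.closedBall 0 r with hAnndef
    have hAnnm : MeasurableSet Ann := measurableSet_ball.diff measurableSet_closedBall
    set F₁ : EuclideanSpace ℝ (Fin N) → ℝ :=
      Set.indicator Ω (fun x => ‖fderiv ℝ φ x‖ ^ p) with hF₁def
    set F₂ : EuclideanSpace ℝ (Fin N) → ℝ :=
      Set.indicator Ann (fun _ => ε ^ (p*ν) / (R-r)^p) with hF₂def
    have hεppν : (0:ℝ) ≤ ε ^ (p*ν) := Real.rpow_nonneg hε.le _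
    have hRrp : (0:ℝ) < (R-r)^p := Real.rpow_pos_of_pos hRr _
    have hsphere : ∀ s' : ℝ, ∀ᵐ x : EuclideanSpace ℝ (Fin N), ‖x‖ ≠ s' := by
      intro s'
      have hz := Measure.addHaar_sphere (volume : Measure (EuclideanSpace ℝ (Fin N))) 0 s'
      rw [ae_iff]
      refine measure_mono_null ?_ hz
      intro x hx
      simp only [Set.mem_setOf_eq, not_not] at hx
      simpa [Metric.mem_sphere, dist_zero_right] using hx
    have hptwise : ∀ᵐ x : EuclideanSpace ℝ (Fin N),
        ‖fderiv ℝ w x‖ ^ p ≤ F₁ x + F₂ x := by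
      filter_upwards [hψae, hsphere r, hsphere R] with x hψx hxr hxR
      have hF1nn : 0 ≤ F₁ x := Set.indicator_nonneg (fun y _ => by positivity) x
      have hF2nn : 0 ≤ F₂ x := Set.indicator_nonneg (fun y _ => by positivity) x
      by_cases hxΩ : x ∈ Ω
      · have hwφ : fderiv ℝ w x = fderiv ℝ φ x := by
          apply Filter.EventuallyEq.fderiv_eq
          have hb : Metric.ball (0:EuclideanSpace ℝ (Fin N)) r ∈ 𝓝 x :=
            Metric.isOpen_ball.mem_nhds (hΩr hxΩ)
          filter_upwards [hb] with y hy
          rw [Metric.mem_ball, dist_zero_right] at hy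
          simp only [hwdef]
          rw [hη1 y hy.le, one_mul]
        have hF1x : F₁ x = ‖fderiv ℝ φ x‖ ^ p := by
          rw [hF₁def, Set.indicator_of_mem hxΩ]
        rw [hwφ, ← hF1x]
        linarith
      · have hψx := hψx hxΩ
        have hψv : ψ x = 0 := hψ0' x hxΩ
        have hww : w = fun y => η y * ψ y + ε^ν * η y := by
          funext y
          simp only [hwdef, hψdef]
          ring
        rcases lt_trichotomy ‖x‖ r with hlt | heq | hgt
        · have hwφ : fderiv ℝ w x = fderiv ℝ φ x := by
            apply Filter.EventuallyEq.fderiv_eq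
            have hb : Metric.ball (0:EuclideanSpace ℝ (Fin N)) r ∈ 𝓝 x :=
              Metric.isOpen_ball.mem_nhds (by rwa [Metric.mem_ball, dist_zero_right])
            filter_upwards [hb] with y hy
            rw [Metric.mem_ball, dist_zero_right] at hy
            simp only [hwdef]
            rw [hη1 y hy.le, one_mul]
          have hφψ : fderiv ℝ φ x = fderiv ℝ ψ x := by
            have hφeq : φ = fun y => ψ y + ε^ν := by
              funext y
              simp [hψdef]
            rw [hφeq, fderiv_add_const]
          rw [hwφ, hφψ, hψx.fderiv, norm_zero, Real.zero_rpow hp0.ne']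
          linarith
        · exact absurd heq hxr
        · rcases lt_trichotomy ‖x‖ R with hltR | heqR | hgtR
          · -- annulus case
            have hx0 : x ≠ 0 := by
              intro h0
              rw [h0, norm_zero] at hgt
              linarith
            have hset : IsOpen {y : EuclideanSpace ℝ (Fin N) | r < ‖y‖ ∧ ‖y‖ < R} :=
              (isOpen_lt continuous_const continuous_norm).inter
                (isOpen_lt continuous_norm continuous_const)
            have hmem : x ∈ {y : EuclideanSpace ℝ (Fin N) | r < ‖y‖ ∧ ‖y‖ < R} := ⟨hgt, hltR⟩
            have hloc : η =ᶠ[𝓝 x] fun y => (R - ‖y‖)/(R-r) := by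
              filter_upwards [hset.mem_nhds hmem] with y hy
              obtain ⟨hy1, hy2⟩ := hy
              have hq1 : (R - ‖y‖)/(R-r) ≤ 1 := by rw [div_le_one hRr]; linarith
              have hq0 : (0:ℝ) ≤ (R - ‖y‖)/(R-r) := div_nonneg (by linarith) hRr.le
              simp only [hηdef]
              rw [min_eq_right hq1, max_eq_right hq0]
            have hdn : DifferentiableAt ℝ
                (fun y : EuclideanSpace ℝ (Fin N) => (R - ‖y‖)/(R-r)) x := by
              have hsubd : DifferentiableAt ℝ
                  (fun y : EuclideanSpace ℝ (Fin N) => R - ‖y‖) x :=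
                (differentiableAt_const R).sub
                  (DifferentiableAt.norm (𝕜 := ℝ) (f := fun y : EuclideanSpace ℝ (Fin N) => y)
                    differentiableAt_fun_id hx0)
              have hdiveq : (fun y : EuclideanSpace ℝ (Fin N) => (R - ‖y‖)/(R-r)) =
                  fun y : EuclideanSpace ℝ (Fin N) => (R - ‖y‖) * (R-r)⁻¹ := by
                funext y
                rw [div_eq_mul_inv]
              rw [hdiveq]
              exact hsubd.mul_const _
            have hηdiff : DifferentiableAt ℝ η x := hdn.congr_of_eventuallyEq hloc
            have hfη : ‖fderiv ℝ η x‖ ≤ (R-r)⁻¹ := by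
              have h := norm_fderiv_le_of_lipschitz (x₀ := x) ℝ hηlip
              rwa [Real.coe_toNNReal _ (inv_nonneg.2 hRr.le)] at h
            have hmul : HasFDerivAt (fun y => η y * ψ y)
                (η x • (0:EuclideanSpace ℝ (Fin N) →L[ℝ] ℝ) + ψ x • fderiv ℝ η x) x :=
              hηdiff.hasFDerivAt.mul hψx
            have hcm : HasFDerivAt (fun y => ε^ν * η y) (ε^ν • fderiv ℝ η x) x :=
              hηdiff.hasFDerivAt.const_mul _
            have hsum := hmul.add hcm
            have hwd : HasFDerivAt w (ε^ν • fderiv ℝ η x) x := by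
              rw [hww]
              refine hsum.congr_fderiv ?_
              rw [hψv]
              simp
            have hnw : ‖fderiv ℝ w x‖ ≤ ε^ν * (R-r)⁻¹ := by
              rw [hwd.fderiv, norm_smul, Real.norm_eq_abs,
                abs_of_nonneg (Real.rpow_nonneg hε.le _)]
              exact mul_le_mul_of_nonneg_left hfη (Real.rpow_nonneg hε.le _)
            have hxA : x ∈ Ann := by
              simp only [hAnndef, Set.mem_diff, Metric.mem_ball, Metric.mem_closedBall,
                dist_zero_right, not_le]
              exact ⟨hltR, hgt⟩
            have hF2x : F₂ x = ε ^ (p*ν) / (R-r)^p := by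
              rw [hF₂def, Set.indicator_of_mem hxA]
            have hle2 : ‖fderiv ℝ w x‖ ^ p ≤ (ε^ν * (R-r)⁻¹) ^ p :=
              Real.rpow_le_rpow (norm_nonneg _) hnw hp0.le
            have heq2 : (ε^ν * (R-r)⁻¹ : ℝ) ^ p = ε ^ (p*ν) / (R-r)^p := by
              rw [Real.mul_rpow (Real.rpow_nonneg hε.le _) (inv_nonneg.2 hRr.le),
                ← Real.rpow_mul hε.le, Real.inv_rpow hRr.le, mul_comm ν p, div_eq_mul_inv]
            have hfin : ‖fderiv ℝ w x‖ ^ p ≤ ε ^ (p*ν) / (R-r)^p := by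
              rw [← heq2]; exact hle2
            rw [← hF2x] at hfin
            linarith
          · exact absurd heqR hxR
          · have hfw : fderiv ℝ w x = 0 := by
              have hopen : IsOpen {y : EuclideanSpace ℝ (Fin N) | R < ‖y‖} :=
                isOpen_lt continuous_const continuous_norm
              have hev : w =ᶠ[𝓝 x] (fun _ => (0:ℝ)) := by
                filter_upwards [hopen.mem_nhds hgtR] with y hy
                simp only [hwdef]
                rw [hη0 y (le_of_lt hy), zero_mul]
              rw [hev.fderiv_eq]
              exact fderiv_const_apply 0
            rw [hfw, norm_zero, Real.zero_rpow hp0.ne']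
            linarith
    -- integrate
    have hcφb : ∀ x, ‖fderiv ℝ φ x‖ ≤ (cφ:ℝ) := fun x => norm_fderiv_le_of_lipschitz (x₀ := x) ℝ hφlip
    have hF1int : Integrable F₁ := by
      rw [hF₁def, integrable_indicator_iff hΩm]
      apply Measure.integrableOn_of_bounded (M := (cφ:ℝ)^p) hΩb.measure_lt_top.ne
      · apply Measurable.aestronglyMeasurable
        have hgcont : Continuous (fun t : ℝ => t ^ p) := by
          rw [continuous_iff_continuousAt]
          intro t
          exact Real.continuousAt_rpow_const t p (Or.inr hp0.le)
        exact hgcont.measurable.comp (measurable_fderiv ℝ φ).norm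
      · apply Eventually.of_forall
        intro x
        rw [Real.norm_eq_abs, abs_of_nonneg (by positivity)]
        exact Real.rpow_le_rpow (norm_nonneg _) (hcφb x) hp0.le
    have hAnnfin : volume Ann < ⊤ :=
      lt_of_le_of_lt (measure_mono Set.diff_subset) measure_ball_lt_top
    have hF2int : Integrable F₂ := by
      rw [hF₂def, integrable_indicator_iff hAnnm]
      exact integrableOn_const hAnnfin.ne
    have hintle : (∫ x, ‖fderiv ℝ w x‖ ^ p) ≤ ∫ x, (F₁ x + F₂ x) :=
      integral_mono_of_nonneg (Eventually.of_forall fun x => by positivity)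
        (hF1int.add hF2int) hptwise
    have hsumint : (∫ x, (F₁ x + F₂ x)) =
        (∫ x in Ω, ‖fderiv ℝ φ x‖ ^ p) + (ε^(p*ν)/(R-r)^p) * (volume Ann).toReal := by
      rw [integral_add hF1int hF2int, hF₁def, hF₂def, integral_indicator hΩm,
        integral_indicator hAnnm, setIntegral_const, smul_eq_mul, mul_comm, measureReal_def]
    have hAnnle : (ε^(p*ν)/(R-r)^p) * (volume Ann).toReal ≤
        ε ^ (p * ν) * (volume (Metric.ball (0 : EuclideanSpace ℝ (Fin N)) R \
          Metric.ball (0 : EuclideanSpace ℝ (Fin N)) r)).toReal / (R - r) ^ p := by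
      have hsub : Ann ⊆ Metric.ball (0 : EuclideanSpace ℝ (Fin N)) R \
          Metric.ball (0 : EuclideanSpace ℝ (Fin N)) r :=
        Set.diff_subset_diff_right Metric.ball_subset_closedBall
      have hbig : volume (Metric.ball (0 : EuclideanSpace ℝ (Fin N)) R \
          Metric.ball (0 : EuclideanSpace ℝ (Fin N)) r) ≠ ⊤ :=
        (lt_of_le_of_lt (measure_mono Set.diff_subset) measure_ball_lt_top).ne
      have hm : (volume Ann).toReal ≤ (volume (Metric.ball (0 : EuclideanSpace ℝ (Fin N)) R \
          Metric.ball (0 : EuclideanSpace ℝ (Fin N)) r)).toReal :=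
        ENNReal.toReal_mono hbig (measure_mono hsub)
      rw [div_mul_eq_mul_div]
      apply div_le_div_of_nonneg_right ?_ hRrp.le
      exact mul_le_mul_of_nonneg_left hm hεppν
    have hEside : (∫ x, ‖fderiv ℝ w x‖ ^ p) ≤
        (ε ^ (p * ν) * (volume (Metric.ball (0 : EuclideanSpace ℝ (Fin N)) R \
          Metric.ball (0 : EuclideanSpace ℝ (Fin N)) r)).toReal / (R - r) ^ p)
        + ∫ x in Ω, ‖fderiv ℝ φ x‖ ^ p := by
      rw [hsumint] at hintle
      linarith
    -- conclude
    calc (∫ x in Ω, ((ε + v x) ^ ν) ^ pstar) ^ (1/pstar)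
        ≤ (∫ x, |w x| ^ pstar) ^ (1/pstar) := hLHS
      _ ≤ S * (∫ x, ‖gradient w x‖ ^ p) ^ (1/p) := key
      _ ≤ S * ((ε ^ (p * ν) * (volume (Metric.ball (0 : EuclideanSpace ℝ (Fin N)) R \
          Metric.ball (0 : EuclideanSpace ℝ (Fin N)) r)).toReal / (R - r) ^ p)
            + ∫ x in Ω, ‖gradient φ x‖ ^ p) ^ (1/p) := by
          apply mul_le_mul_of_nonneg_left ?_ hS.le
          apply Real.rpow_le_rpow (integral_nonneg fun x => by positivity) ?_
            (one_div_nonneg.2 hp0.le)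
          simp only [hgradnorm]
          exact hEside
  · -- the limit statement
    have h1 : Tendsto (fun ε : ℝ => ε ^ (p*ν)) (𝓝[>] (0:ℝ)) (𝓝 0) := by
      have hcont : ContinuousAt (fun ε : ℝ => ε ^ (p*ν)) 0 :=
        Real.continuousAt_rpow_const 0 (p*ν) (Or.inr (mul_pos hp0 hν1).le)
      have := hcont.tendsto
      rw [Real.zero_rpow (ne_of_gt (mul_pos hp0 hν1))] at this
      exact this.mono_left nhdsWithin_le_nhds
    have h2 := (h1.mul_const ((volume (Metric.ball (0 : EuclideanSpace ℝ (Fin N)) R \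
      Metric.ball (0 : EuclideanSpace ℝ (Fin N)) r)).toReal)).div_const ((R - r) ^ p)
    simpa using h2
end

section
/- Marcinkiewicz estimate for the function (Lemma 3.12, part (i), Lipschitz form): Let N > 2, 1 < p < N, p* = Np/(N−p), 0 < r < p, and let Ω ⊂ ℝ^N be a bounded open set. Suppose S > 0 is such that (∫_{ℝ^N} |w|^{p*} dx)^{1/p*} ≤ S (∫_{ℝ^N} |∇w|^p dx)^{1/p} for every Lipschitz w : ℝ^N → ℝ with compact support. Let u : ℝ^N → ℝ be Lipschitz with u = 0 on ℝ^N∖Ω, and assume there is M > 0 with ∫_{{|u|<ℓ}} |∇u|^p dx ≤ ℓ^r M for every ℓ > 0. Then for every ℓ > 0: |{x ∈ Ω : |u(x)| > ℓ}| ≤ S^{p*} M^{N/(N−p)} ℓ^{−N(p−r)/(N−p)}. -/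
open MeasureTheory
open scoped ENNReal

open Filter Set Metric
open scoped NNReal Topology Pointwise


open MeasureTheory Filter Set Metric
open scoped ENNReal NNReal Topology Pointwise

lemma aux_fderiv_zero {N : ℕ} {f : EuclideanSpace ℝ (Fin N) → ℝ} {K : ℝ≥0}
    (hf : LipschitzWith K f) {s : Set (EuclideanSpace ℝ (Fin N))}
    (hs : MeasurableSet s) (h0 : ∀ x ∈ s, f x = 0) :
    ∀ᵐ x ∂(volume.restrict s), fderiv ℝ f x = 0 := by
  have hdiff : ∀ᵐ x ∂(volume : Measure (EuclideanSpace ℝ (Fin N))),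
      DifferentiableAt ℝ f x := hf.ae_differentiableAt
  filter_upwards [Besicovitch.ae_tendsto_measure_inter_div volume s,
    ae_restrict_mem hs, ae_restrict_of_ae hdiff] with x hx xs hdx
  set L := fderiv ℝ f x with hL
  have hder : HasFDerivAt f L x := hdx.hasFDerivAt
  ext z
  simp only [ContinuousLinearMap.zero_apply]
  have key : ∀ ε : ℝ, 0 < ε → ‖L z‖ ≤ ε * (‖z‖ + ε) + ‖L‖ * ε := by
    intro ε εpos
    have B1 : ∀ᶠ r in 𝓝[>] (0 : ℝ), (s ∩ ({x} + r • closedBall z ε)).Nonempty :=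
      MeasureTheory.Measure.eventually_nonempty_inter_smul_of_density_one volume s x hx _
        measurableSet_closedBall (measure_closedBall_pos volume z εpos).ne'
    have hlo : ∀ᶠ y in 𝓝 x, ‖f y - f x - L (y - x)‖ ≤ ε * ‖y - x‖ :=
      hder.isLittleO.def εpos
    obtain ⟨ρ, ρpos, hρ⟩ := Metric.eventually_nhds_iff.1 hlo
    have B2 : ∀ᶠ r in 𝓝[>] (0 : ℝ), r ∈ Ioo (0:ℝ) (ρ / (‖z‖ + ε + 1)) := by
      apply Ioo_mem_nhdsGT_of_mem
      constructor
      · exact le_rfl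
      · positivity
    obtain ⟨r, ⟨y, ys, hy⟩, hr0, hrρ⟩ := (B1.and B2).exists
    rw [Set.singleton_add] at hy
    obtain ⟨b, hb, hxb⟩ := hy
    obtain ⟨c, hc, rfl⟩ := hb
    have hxb' : y = x + r • c := by rw [← hxb]
    have hyx : y - x = r • c := by rw [hxb']; abel
    have hcz : ‖c - z‖ ≤ ε := by
      have := mem_closedBall.1 hc
      rwa [dist_eq_norm] at this
    have hcn : ‖c‖ ≤ ‖z‖ + ε := by
      have h := norm_add_le (c - z) z
      rw [sub_add_cancel] at h
      linarith
    have hdy : dist y x < ρ := by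
      rw [dist_eq_norm, hyx, norm_smul, Real.norm_eq_abs, abs_of_pos hr0]
      have h1 : r * ‖c‖ ≤ r * (‖z‖ + ε) := by
        apply mul_le_mul_of_nonneg_left hcn hr0.le
      have h2 : r * (‖z‖ + ε + 1) < ρ := (lt_div_iff₀ (by positivity)).1 hrρ
      nlinarith [norm_nonneg c]
    have hfy : f y = 0 := h0 y ys
    have hfx : f x = 0 := h0 x xs
    have := hρ hdy
    rw [hfy, hfx, sub_zero, zero_sub, norm_neg, hyx] at this
    rw [L.map_smul, norm_smul, norm_smul, Real.norm_eq_abs, abs_of_pos hr0] at this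
    have hLc : ‖L c‖ ≤ ε * (‖z‖ + ε) := by
      have h4 : r * ‖L c‖ ≤ r * (ε * (‖z‖ + ε)) := by
        calc r * ‖L c‖ ≤ ε * (r * ‖c‖) := this
        _ ≤ ε * (r * (‖z‖ + ε)) := by
            apply mul_le_mul_of_nonneg_left (mul_le_mul_of_nonneg_left hcn hr0.le) εpos.le
        _ = r * (ε * (‖z‖ + ε)) := by ring
      exact le_of_mul_le_mul_left h4 hr0
    calc ‖L z‖ = ‖L c + L (z - c)‖ := by rw [← map_add]; congr 1; simp
    _ ≤ ‖L c‖ + ‖L (z - c)‖ := norm_add_le _ _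
    _ ≤ ε * (‖z‖ + ε) + ‖L‖ * ‖z - c‖ := by
        gcongr
        exact L.le_opNorm _
    _ ≤ ε * (‖z‖ + ε) + ‖L‖ * ε := by
        gcongr
        rw [← norm_neg]; simpa [neg_sub] using hcz
  have T : Tendsto (fun ε : ℝ => ε * (‖z‖ + ε) + ‖L‖ * ε) (𝓝[>] 0) (𝓝 0) := by
    have hco : Continuous (fun ε : ℝ => ε * (‖z‖ + ε) + ‖L‖ * ε) := by continuity
    have : Tendsto (fun ε : ℝ => ε * (‖z‖ + ε) + ‖L‖ * ε) (𝓝 0)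
        (𝓝 (0 * (‖z‖ + 0) + ‖L‖ * 0)) := by simpa using hco.tendsto 0
    simpa using this.mono_left nhdsWithin_le_nhds
  have : ‖L z‖ ≤ 0 := by
    apply le_of_tendsto_of_tendsto tendsto_const_nhds T
    filter_upwards [self_mem_nhdsWithin] with ε hε using key ε hε
  simpa using norm_le_zero_iff.1 this

/-- Marcinkiewicz estimate for the function (Lemma 3.12, part (i), Lipschitz form). -/
theorem stmt_8
    (N : ℕ) (p pstar r S M : ℝ)
    (hN : 2 < N) (hp1 : 1 < p) (hp2 : p < N)
    (hpstar : pstar = (N : ℝ) * p / ((N : ℝ) - p))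
    (hr1 : 0 < r) (hr2 : r < p) (hS : 0 < S) (hM : 0 < M)
    (Ω : Set (EuclideanSpace ℝ (Fin N))) (hΩo : IsOpen Ω)
    (hΩb : Bornology.IsBounded Ω)
    (hSob : ∀ w : EuclideanSpace ℝ (Fin N) → ℝ, (∃ c, LipschitzWith c w) →
        HasCompactSupport w →
        (∫ x, |w x| ^ pstar) ^ (1 / pstar) ≤ S * (∫ x, ‖gradient w x‖ ^ p) ^ (1 / p))
    (u : EuclideanSpace ℝ (Fin N) → ℝ) (hu : ∃ c, LipschitzWith c u)
    (huΩ : ∀ x, x ∉ Ω → u x = 0)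
    (hen : ∀ ℓ : ℝ, 0 < ℓ →
        ∫ x in {x | x ∈ Ω ∧ |u x| < ℓ}, ‖gradient u x‖ ^ p ≤ ℓ ^ r * M) :
    ∀ ℓ : ℝ, 0 < ℓ →
      volume {x | x ∈ Ω ∧ ℓ < |u x|} ≤
        ENNReal.ofReal (S ^ pstar * M ^ ((N : ℝ) / ((N : ℝ) - p)) *
          ℓ ^ (-(N : ℝ) * (p - r) / ((N : ℝ) - p))) := by
  intro ℓ hℓ
  obtain ⟨c, hcu⟩ := hu
  have hNR : (2 : ℝ) < (N : ℝ) := by exact_mod_cast hN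
  have hp0 : (0:ℝ) < p := by linarith
  have hNp : (0:ℝ) < (N:ℝ) - p := by linarith
  have hpstar_pos : 0 < pstar := by rw [hpstar]; positivity
  have hpstar_ne : pstar ≠ 0 := hpstar_pos.ne'
  have hcontu : Continuous u := hcu.continuous
  set w : EuclideanSpace ℝ (Fin N) → ℝ := fun x => max (-ℓ) (min ℓ (u x)) with hwdef
  have hwlip : LipschitzWith c w := (hcu.const_min ℓ).const_max (-ℓ)
  have hw0 : ∀ x, x ∉ Ω → w x = 0 := by
    intro x hx
    simp only [hwdef, huΩ x hx]
    rw [min_eq_right hℓ.le, max_eq_right (by linarith)]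
  have hwcs : HasCompactSupport w := by
    have h1 : tsupport w ⊆ closure Ω :=
      closure_mono (Function.support_subset_iff'.2 hw0)
    exact IsCompact.of_isClosed_subset hΩb.isCompact_closure (isClosed_tsupport w) h1
  have hwle : ∀ y, w y ≤ ℓ := fun y => max_le (by linarith) (min_le_left _ _)
  have hwge : ∀ y, -ℓ ≤ w y := fun y => le_max_left _ _
  -- gradient of w vanishes where |u| ≥ ℓ
  have g1 : ∀ x, ℓ ≤ |u x| → gradient w x = 0 := by
    intro x hx
    have hfd : fderiv ℝ w x = 0 := by
      rcases le_abs.1 hx with h | h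
      · have hwx : w x = ℓ := by
          simp only [hwdef]
          rw [min_eq_left h, max_eq_right (by linarith)]
        have hmax : IsLocalMax w x :=
          Filter.Eventually.of_forall (fun y => by rw [hwx]; exact hwle y)
        exact hmax.fderiv_eq_zero
      · have hwx : w x = -ℓ := by
          simp only [hwdef]
          rw [min_eq_right (by linarith), max_eq_left (by linarith)]
        have hmin : IsLocalMin w x :=
          Filter.Eventually.of_forall (fun y => by rw [hwx]; exact hwge y)
        exact hmin.fderiv_eq_zero
    show (InnerProductSpace.toDual ℝ _).symm (fderiv ℝ w x) = 0
    rw [hfd, map_zero]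
  -- gradient of w equals gradient of u where |u| < ℓ
  have hO : IsOpen {y : EuclideanSpace ℝ (Fin N) | |u y| < ℓ} :=
    isOpen_lt hcontu.abs continuous_const
  have g2 : ∀ x, |u x| < ℓ → gradient w x = gradient u x := by
    intro x hx
    have heq : w =ᶠ[nhds x] u := by
      filter_upwards [hO.mem_nhds hx] with y hy
      have h2 := abs_lt.1 hy
      simp only [hwdef]
      rw [min_eq_right h2.2.le, max_eq_right h2.1.le]
    show (InnerProductSpace.toDual ℝ _).symm (fderiv ℝ w x)
        = (InnerProductSpace.toDual ℝ _).symm (fderiv ℝ u x)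
    rw [heq.fderiv_eq]
  -- gradient of w vanishes a.e. outside Ω
  have g3 : ∀ᵐ x : EuclideanSpace ℝ (Fin N), x ∉ Ω → gradient w x = 0 := by
    have h1 := aux_fderiv_zero hwlip hΩo.measurableSet.compl
      (fun x hx => hw0 x (by simpa using hx))
    have h2 := ae_imp_of_ae_restrict h1
    filter_upwards [h2] with x hx hxΩ
    have := hx (by simpa using hxΩ)
    show (InnerProductSpace.toDual ℝ _).symm (fderiv ℝ w x) = 0
    rw [this, map_zero]
  -- norm of gradient = norm of fderiv
  have ngrad : ∀ (f : EuclideanSpace ℝ (Fin N) → ℝ) x,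
      ‖gradient f x‖ = ‖fderiv ℝ f x‖ := fun f x =>
    LinearIsometryEquiv.norm_map _ _
  set F : EuclideanSpace ℝ (Fin N) → ℝ := fun x => ‖gradient u x‖ ^ p with hFdef
  set G : EuclideanSpace ℝ (Fin N) → ℝ := fun x => ‖gradient w x‖ ^ p with hGdef
  have hFmeas : Measurable F := by
    have : F = fun x => ‖fderiv ℝ u x‖ ^ p := by
      funext x; simp only [hFdef, ngrad]
    rw [this]
    exact (Real.continuous_rpow_const hp0.le).measurable.comp
      (measurable_fderiv ℝ u).norm
  have hGmeas : Measurable G := by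
    have : G = fun x => ‖fderiv ℝ w x‖ ^ p := by
      funext x; simp only [hGdef, ngrad]
    rw [this]
    exact (Real.continuous_rpow_const hp0.le).measurable.comp
      (measurable_fderiv ℝ w).norm
  have hFnn : ∀ x, 0 ≤ F x := fun x => Real.rpow_nonneg (norm_nonneg _) _
  have hGnn : ∀ x, 0 ≤ G x := fun x => Real.rpow_nonneg (norm_nonneg _) _
  set E : Set (EuclideanSpace ℝ (Fin N)) := {x | x ∈ Ω ∧ |u x| < ℓ} with hEdef
  have hEopen : IsOpen E := by
    have : E = Ω ∩ {y | |u y| < ℓ} := rfl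
    rw [this]; exact hΩo.inter hO
  have hEmeas : MeasurableSet E := hEopen.measurableSet
  have hEfin : volume E ≠ ⊤ :=
    ((measure_mono (fun x hx => hx.1)).trans_lt hΩb.measure_lt_top).ne
  have hFbdd : ∀ x, ‖F x‖ ≤ (c:ℝ) ^ p := by
    intro x
    rw [Real.norm_eq_abs, abs_of_nonneg (hFnn x), hFdef]
    simp only
    apply Real.rpow_le_rpow (norm_nonneg _) _ hp0.le
    rw [ngrad]
    exact norm_fderiv_le_of_lipschitz ℝ hcu
  have hindint : Integrable (E.indicator F) := by
    rw [integrable_indicator_iff hEmeas]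
    exact Measure.integrableOn_of_bounded hEfin hFmeas.aestronglyMeasurable
      (Filter.Eventually.of_forall fun x => hFbdd x)
  have hae0 : ∀ᵐ x : EuclideanSpace ℝ (Fin N), G x ≤ E.indicator F x := by
    filter_upwards [g3] with x hg3
    by_cases hxΩ : x ∈ Ω
    · by_cases hxℓ : |u x| < ℓ
      · have hxE : x ∈ E := ⟨hxΩ, hxℓ⟩
        rw [Set.indicator_of_mem hxE]
        simp only [hGdef, hFdef, g2 x hxℓ]
        exact le_refl _
      · have : gradient w x = 0 := g1 x (not_lt.1 hxℓ)
        have hG0 : G x = 0 := by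
          simp only [hGdef, this, norm_zero]
          exact Real.zero_rpow hp0.ne'
        rw [hG0]
        exact Set.indicator_nonneg (fun y _ => hFnn y) x
    · have : gradient w x = 0 := hg3 hxΩ
      have hG0 : G x = 0 := by
        simp only [hGdef, this, norm_zero]
        exact Real.zero_rpow hp0.ne'
      rw [hG0]
      exact Set.indicator_nonneg (fun y _ => hFnn y) x
  have hGint : Integrable G := by
    apply hindint.mono' hGmeas.aestronglyMeasurable
    filter_upwards [hae0] with x hx
    rwa [Real.norm_eq_abs, abs_of_nonneg (hGnn x)]
  have hJ : ∫ x, G x ≤ ℓ ^ r * M := by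
    calc ∫ x, G x ≤ ∫ x, E.indicator F x := integral_mono_ae hGint hindint hae0
    _ = ∫ x in E, F x := integral_indicator hEmeas
    _ ≤ ℓ ^ r * M := hen ℓ hℓ
  have hJnn : 0 ≤ ∫ x, G x := integral_nonneg hGnn
  -- Sobolev inequality for w
  have hsob := hSob w ⟨c, hwlip⟩ hwcs
  -- lower bound for the left-hand side
  set A : Set (EuclideanSpace ℝ (Fin N)) := {x | x ∈ Ω ∧ ℓ < |u x|} with hAdef
  have hAopen : IsOpen A := by
    have : A = Ω ∩ {y | ℓ < |u y|} := rfl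
    rw [this]; exact hΩo.inter (isOpen_lt continuous_const hcontu.abs)
  have hAmeas : MeasurableSet A := hAopen.measurableSet
  have hAfin : volume A ≠ ⊤ :=
    ((measure_mono (fun x hx => hx.1)).trans_lt hΩb.measure_lt_top).ne
  set V : ℝ := (volume A).toReal with hVdef
  have hVnn : 0 ≤ V := ENNReal.toReal_nonneg
  have hWint : Integrable (fun x => |w x| ^ pstar) := by
    apply Continuous.integrable_of_hasCompactSupport
    · exact hwlip.continuous.abs.rpow_const (fun x => Or.inr hpstar_pos.le)
    · apply hwcs.comp_left (g := fun y : ℝ => |y| ^ pstar)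
      rw [abs_zero]
      exact Real.zero_rpow hpstar_ne
  have hIlow : ℓ ^ pstar * V ≤ ∫ x, |w x| ^ pstar := by
    have hconst : Integrable (A.indicator (fun _ => ℓ ^ pstar)) := by
      rw [integrable_indicator_iff hAmeas]
      exact integrableOn_const hAfin
    have hmono : ∀ x, A.indicator (fun _ => ℓ ^ pstar) x ≤ |w x| ^ pstar := by
      intro x
      by_cases hxA : x ∈ A
      · rw [Set.indicator_of_mem hxA]
        have hwabs : |w x| = ℓ := by
          rcases lt_abs.1 hxA.2 with h | h
          · have : w x = ℓ := by
              simp only [hwdef]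
              rw [min_eq_left h.le, max_eq_right (by linarith)]
            rw [this, abs_of_pos hℓ]
          · have : w x = -ℓ := by
              simp only [hwdef]
              rw [min_eq_right (by linarith), max_eq_left (by linarith)]
            rw [this, abs_neg, abs_of_pos hℓ]
        rw [hwabs]
      · rw [Set.indicator_of_notMem hxA]
        exact Real.rpow_nonneg (abs_nonneg _) _
    calc ℓ ^ pstar * V = ∫ x, A.indicator (fun _ => ℓ ^ pstar) x := by
          rw [integral_indicator_const _ hAmeas, smul_eq_mul, mul_comm]; rfl
    _ ≤ ∫ x, |w x| ^ pstar := integral_mono hconst hWint hmono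
  -- combine
  have step1 : ℓ * V ^ (1/pstar) ≤ S * (ℓ ^ r * M) ^ (1/p) := by
    have e1 : (ℓ ^ pstar * V) ^ (1/pstar) = ℓ * V ^ (1/pstar) := by
      rw [Real.mul_rpow (Real.rpow_nonneg hℓ.le _) hVnn, ← Real.rpow_mul hℓ.le,
        mul_one_div_cancel hpstar_ne, Real.rpow_one]
    have mono1 : (ℓ ^ pstar * V) ^ (1/pstar) ≤ (∫ x, |w x| ^ pstar) ^ (1/pstar) :=
      Real.rpow_le_rpow (by positivity) hIlow (by positivity)
    have mono2 : S * (∫ x, G x) ^ (1/p) ≤ S * (ℓ ^ r * M) ^ (1/p) := by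
      apply mul_le_mul_of_nonneg_left _ hS.le
      exact Real.rpow_le_rpow hJnn hJ (by positivity)
    rw [← e1]
    exact mono1.trans (hsob.trans mono2)
  have step2 : V ^ (1/pstar) ≤ S * (ℓ ^ r * M) ^ (1/p) / ℓ := by
    rw [le_div_iff₀ hℓ, mul_comm]
    exact step1
  have step3 : V ≤ (S * (ℓ ^ r * M) ^ (1/p) / ℓ) ^ pstar := by
    have hVid : V = (V ^ (1/pstar)) ^ pstar := by
      rw [← Real.rpow_mul hVnn, one_div_mul_cancel hpstar_ne, Real.rpow_one]
    rw [hVid]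
    exact Real.rpow_le_rpow (Real.rpow_nonneg hVnn _) step2 hpstar_pos.le
  have ebase : S * (ℓ ^ r * M) ^ (1/p) / ℓ = S * M ^ (1/p) * ℓ ^ (r/p - 1) := by
    rw [Real.mul_rpow (Real.rpow_nonneg hℓ.le r) hM.le, ← Real.rpow_mul hℓ.le,
      mul_one_div, Real.rpow_sub hℓ, Real.rpow_one]
    ring
  have step4 : (S * (ℓ ^ r * M) ^ (1/p) / ℓ) ^ pstar =
      S ^ pstar * M ^ ((N : ℝ) / ((N : ℝ) - p)) *
        ℓ ^ (-(N : ℝ) * (p - r) / ((N : ℝ) - p)) := by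
    rw [ebase, Real.mul_rpow (by positivity) (Real.rpow_nonneg hℓ.le _),
      Real.mul_rpow hS.le (Real.rpow_nonneg hM.le _),
      ← Real.rpow_mul hM.le, ← Real.rpow_mul hℓ.le]
    congr 2
    · rw [hpstar]; field_simp
    · rw [hpstar]; field_simp; ring
  have hfinal : V ≤ S ^ pstar * M ^ ((N : ℝ) / ((N : ℝ) - p)) *
      ℓ ^ (-(N : ℝ) * (p - r) / ((N : ℝ) - p)) := by
    rw [← step4]; exact step3
  have hRHSnn : 0 ≤ S ^ pstar * M ^ ((N : ℝ) / ((N : ℝ) - p)) *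
      ℓ ^ (-(N : ℝ) * (p - r) / ((N : ℝ) - p)) := by positivity
  exact (ENNReal.le_ofReal_iff_toReal_le hAfin hRHSnn).2 hfinal
end

section
/- Interpolation estimate for fractional powers (gradient estimate of Subsection 2.6): Let N > 2, 1 < σ < 2, b = Nσ/(N−2+σ), 2* = 2N/(N−2), and suppose S > 0 is such that (∫_{ℝ^N} |w|^{2*} dx)^{1/2*} ≤ S (∫_{ℝ^N} |∇w|² dx)^{1/2} for every Lipschitz w : ℝ^N → ℝ with compact support. Then for every nonnegative Lipschitz v : ℝ^N → [0,∞) with compact support: ∫_{ℝ^N} |∇(v^{2/σ})|^b dx ≤ (2/σ)^b S^{2*(2−b)/2} (∫_{ℝ^N} |∇v|² dx)^{b/σ}. -/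
open MeasureTheory
open scoped ENNReal
open InnerProductSpace

/-- Interpolation estimate for fractional powers (gradient estimate of
Subsection 2.6), with `b = Nσ/(N−2+σ)`. -/
theorem stmt_15
    (N : ℕ) (σ b S tstar : ℝ)
    (hN : 2 < N) (hσ1 : 1 < σ) (hσ2 : σ < 2) (hS : 0 < S)
    (hb : b = (N : ℝ) * σ / ((N : ℝ) - 2 + σ))
    (htstar : tstar = 2 * (N : ℝ) / ((N : ℝ) - 2))
    (hSob : ∀ w : EuclideanSpace ℝ (Fin N) → ℝ, (∃ c, LipschitzWith c w) →
        HasCompactSupport w →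
        (∫ x, |w x| ^ tstar) ^ (1 / tstar) ≤
          S * (∫ x, ‖gradient w x‖ ^ 2) ^ ((1 : ℝ) / 2))
    (v : EuclideanSpace ℝ (Fin N) → ℝ) (hv : ∃ c, LipschitzWith c v)
    (hv0 : ∀ x, 0 ≤ v x) (hvc : HasCompactSupport v) :
    ∫ x, ‖gradient (fun y => v y ^ (2 / σ)) x‖ ^ b ≤
      (2 / σ) ^ b * S ^ (tstar * (2 - b) / 2) *
        (∫ x, ‖gradient v x‖ ^ 2) ^ (b / σ) := by
  obtain ⟨c, hlip⟩ := hv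
  have hσ0 : (0:ℝ) < σ := by linarith
  have hN2 : (2:ℝ) < (N:ℝ) := by exact_mod_cast hN
  have hN2' : (0:ℝ) < (N:ℝ) - 2 := by linarith
  have hden : (0:ℝ) < (N:ℝ) - 2 + σ := by linarith
  have hb1 : 1 < b := by rw [hb, lt_div_iff₀ hden]; nlinarith
  have hb2 : b < 2 := by rw [hb, div_lt_iff₀ hden]; nlinarith
  have hb0 : (0:ℝ) < b := by linarith
  have h2b : (0:ℝ) < 2 - b := by linarith
  have ht0 : (0:ℝ) < tstar := by rw [htstar]; positivity
  have h2σ : (0:ℝ) < 2 - σ := by linarith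
  set p : ℝ := 2 / σ with hp
  have hp1 : 1 ≤ p := by rw [hp, le_div_iff₀ hσ0]; linarith
  have hp0 : (0:ℝ) < p := by linarith
  -- exponent identities
  have e1 : (2:ℝ) - b = ((N:ℝ)-2)*(2-σ)/((N:ℝ)-2+σ) := by
    rw [hb]; field_simp; ring
  have hkey1 : ((p - 1) * b) * (2 / (2 - b)) = tstar := by
    rw [e1, hp, hb, htstar]; field_simp
  have hkey2 : b / 2 + tstar * (2 - b) / 4 = b / σ := by
    rw [e1, hb, htstar]; field_simp; ring
  -- gradient facts
  have hgradmeas : Measurable (fun x => gradient v x) :=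
    ((toDual ℝ (EuclideanSpace ℝ (Fin N))).symm.continuous.measurable).comp
      (measurable_fderiv ℝ v)
  have hgradbd : ∀ x, ‖gradient v x‖ ≤ (c:ℝ) := by
    intro x
    rw [gradient, LinearIsometryEquiv.norm_map]
    by_cases h : DifferentiableAt ℝ v x
    · exact norm_fderiv_le_of_lipschitz ℝ hlip
    · rw [fderiv_zero_of_not_differentiableAt h]; simp
  have hgradsupp : HasCompactSupport (fun x => gradient v x) :=
    (hvc.fderiv (𝕜 := ℝ)).comp_left
      (g := (toDual ℝ (EuclideanSpace ℝ (Fin N))).symm) (map_zero _)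
  -- a.e. chain rule
  have hae : ∀ᵐ x, ‖gradient (fun y => v y ^ p) x‖ = p * v x ^ (p-1) * ‖gradient v x‖ := by
    filter_upwards [hlip.ae_differentiableAt (μ := volume)] with x hx
    have hg : HasDerivAt (fun t : ℝ => t ^ p) (p * v x ^ (p - 1)) (v x) :=
      Real.hasDerivAt_rpow_const (Or.inr hp1)
    have hcomp : HasFDerivAt (fun y => v y ^ p) ((p * v x ^ (p-1)) • fderiv ℝ v x) x :=
      hg.comp_hasFDerivAt x hx.hasFDerivAt
    rw [gradient, hcomp.fderiv, _root_.map_smul, norm_smul, gradient, Real.norm_eq_abs,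
      abs_of_nonneg (mul_nonneg hp0.le (Real.rpow_nonneg (hv0 x) _))]
  -- the two Hölder factors
  set f1 : EuclideanSpace ℝ (Fin N) → ℝ := fun x => v x ^ ((p-1)*b) with hf1
  set f2 : EuclideanSpace ℝ (Fin N) → ℝ := fun x => ‖gradient v x‖ ^ b with hf2
  have hpb1 : (0:ℝ) < (p-1)*b := by
    have : 0 < p - 1 := by rw [hp]; rw [sub_pos, lt_div_iff₀ hσ0]; linarith
    positivity
  have hf1c : Continuous f1 :=
    hlip.continuous.rpow_const (fun x => Or.inr hpb1.le)
  have hf1supp : HasCompactSupport f1 :=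
    hvc.comp_left (g := fun t : ℝ => t ^ ((p-1)*b)) (Real.zero_rpow hpb1.ne')
  have hmem1 : MemLp f1 (ENNReal.ofReal (2/(2-b))) volume :=
    hf1c.memLp_of_hasCompactSupport hf1supp
  have hrpowb : Continuous (fun t : ℝ => t ^ b) :=
    continuous_id.rpow_const (fun x => Or.inr hb0.le)
  have hf2meas : AEStronglyMeasurable f2 volume :=
    ((hrpowb.measurable).comp hgradmeas.norm).aestronglyMeasurable
  have hf2supp : HasCompactSupport f2 := by
    have h1 : HasCompactSupport (fun x => ‖gradient v x‖) :=
      hgradsupp.comp_left (g := fun y => ‖y‖) norm_zero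
    exact h1.comp_left (g := fun t : ℝ => t ^ b) (Real.zero_rpow hb0.ne')
  have hmem2 : MemLp f2 (ENNReal.ofReal (2/b)) volume := by
    refine hf2supp.memLp_of_bound hf2meas ((c:ℝ) ^ b) ?_
    filter_upwards with x
    rw [hf2, Real.norm_of_nonneg (Real.rpow_nonneg (norm_nonneg _) _)]
    exact Real.rpow_le_rpow (norm_nonneg _) (hgradbd x) hb0.le
  -- Hölder
  have hpq : Real.HolderConjugate (2/(2-b)) (2/b) := by
    rw [Real.holderConjugate_iff]; constructor
    · rw [lt_div_iff₀ h2b]; linarith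
    · rw [inv_div, inv_div]; field_simp; ring
  have hHolder := integral_mul_le_Lp_mul_Lq_of_nonneg (μ := volume) hpq
    (Filter.Eventually.of_forall fun x => Real.rpow_nonneg (hv0 x) _)
    (Filter.Eventually.of_forall fun x => Real.rpow_nonneg (norm_nonneg _) _)
    hmem1 hmem2
  -- simplify Hölder's RHS
  have e2 : ∀ x : EuclideanSpace ℝ (Fin N), f1 x ^ (2/(2-b)) = v x ^ tstar := fun x => by
    rw [hf1]; rw [← Real.rpow_mul (hv0 x), hkey1]
  have e3 : ∀ x : EuclideanSpace ℝ (Fin N), f2 x ^ (2/b) = ‖gradient v x‖ ^ 2 := fun x => by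
    rw [hf2]; rw [← Real.rpow_mul (norm_nonneg _),
      show b * (2/b) = (2:ℝ) by field_simp, Real.rpow_two]
  simp only [e2, e3, one_div_div] at hHolder
  set T : ℝ := ∫ x, v x ^ tstar with hT
  set A : ℝ := ∫ x, ‖gradient v x‖ ^ 2 with hA
  have hT0 : 0 ≤ T := integral_nonneg fun x => Real.rpow_nonneg (hv0 x) _
  have hA0 : 0 ≤ A := integral_nonneg fun x => sq_nonneg _
  -- Sobolev step
  have hsob : T ^ (1/tstar) ≤ S * A ^ ((1:ℝ)/2) := by
    have h := hSob v ⟨c, hlip⟩ hvc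
    have habs : (fun x : EuclideanSpace ℝ (Fin N) => |v x| ^ tstar)
        =ᵐ[volume] fun x => v x ^ tstar := by
      filter_upwards with x
      rw [abs_of_nonneg (hv0 x)]
    rwa [integral_congr_ae habs] at h
  have he0 : (0:ℝ) ≤ tstar * (2-b) / 2 := by positivity
  have h3 : T ^ ((2-b)/2) ≤ S ^ (tstar*(2-b)/2) * A ^ (tstar*(2-b)/4) := by
    have h := Real.rpow_le_rpow (Real.rpow_nonneg hT0 _) hsob he0
    rw [← Real.rpow_mul hT0, show (1/tstar) * (tstar*(2-b)/2) = (2-b)/2 by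
        field_simp] at h
    rwa [Real.mul_rpow hS.le (Real.rpow_nonneg hA0 _), ← Real.rpow_mul hA0,
      show ((1:ℝ)/2) * (tstar*(2-b)/2) = tstar*(2-b)/4 by ring] at h
  -- combine
  have hstep1 : ∫ x, ‖gradient (fun y => v y ^ p) x‖ ^ b = p ^ b * ∫ x, f1 x * f2 x := by
    rw [← integral_const_mul]
    refine integral_congr_ae ?_
    filter_upwards [hae] with x hx
    rw [hx, Real.mul_rpow (mul_nonneg hp0.le (Real.rpow_nonneg (hv0 x) _)) (norm_nonneg _),
      Real.mul_rpow hp0.le (Real.rpow_nonneg (hv0 x) _), ← Real.rpow_mul (hv0 x)]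
    ring
  have hABne : tstar * (2-b)/4 + b/2 ≠ 0 := by
    have : b / σ ≠ 0 := by positivity
    intro h; apply this; rw [← hkey2]; linarith
  calc ∫ x, ‖gradient (fun y => v y ^ p) x‖ ^ b
      = p ^ b * ∫ x, f1 x * f2 x := hstep1
    _ ≤ p ^ b * (T ^ ((2-b)/2) * A ^ (b/2)) := by
        refine mul_le_mul_of_nonneg_left ?_ (Real.rpow_nonneg hp0.le _)
        have e2' : ∀ x : EuclideanSpace ℝ (Fin N), (v x ^ ((p-1)*b)) ^ (2/(2-b)) = v x ^ tstar := e2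
        have e3' : ∀ x : EuclideanSpace ℝ (Fin N), (‖gradient v x‖ ^ b) ^ (2/b) = ‖gradient v x‖ ^ 2 := e3
        simp only [e2', e3'] at hHolder
        exact hHolder
    _ ≤ p ^ b * ((S ^ (tstar*(2-b)/2) * A ^ (tstar*(2-b)/4)) * A ^ (b/2)) := by
        refine mul_le_mul_of_nonneg_left
          (mul_le_mul_of_nonneg_right h3 (Real.rpow_nonneg hA0 _))
          (Real.rpow_nonneg hp0.le _)
    _ = p ^ b * S ^ (tstar*(2-b)/2) * A ^ (b/σ) := by
        rw [mul_assoc, ← Real.rpow_add' hA0 hABne,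
          show tstar * (2-b)/4 + b/2 = b/σ by linarith [hkey2]]
        ring
end

section
/- Comparison of truncated power primitives (used in the proof of Theorem 5.1): Let τ ≥ 2 and n > 0, and define Φ_n(w) = ∫₀^w |T_n(z)|^{τ−2} dz and ψ_n(w) = ∫₀^w |T_n(z)|^{τ/2−1} dz for w ∈ ℝ, where T_n(z) = max(−n, min(n,z)). Then for every w ∈ ℝ: |ψ_n(w)| ≥ (2/τ)|T_n(w)|^{τ/2−1}|w| and |Φ_n(w)| ≤ (|T_n(w)|^{τ/2−1}|w|)^{2(τ−1)/τ}; consequently |Φ_n(w)| ≤ (τ/2)^{2(τ−1)/τ} |ψ_n(w)|^{2(τ−1)/τ}, with a constant independent of n. -/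
/-- Comparison of truncated power primitives (used in the proof of Theorem 5.1). -/
theorem stmt_16
    (τ n : ℝ) (hτ : 2 ≤ τ) (hn : 0 < n)
    (T Φ ψ : ℝ → ℝ)
    (hT : ∀ z : ℝ, T z = max (-n) (min n z))
    (hΦ : ∀ w : ℝ, Φ w = ∫ z in (0 : ℝ)..w, |T z| ^ (τ - 2))
    (hψ : ∀ w : ℝ, ψ w = ∫ z in (0 : ℝ)..w, |T z| ^ (τ / 2 - 1)) :
    ∀ w : ℝ,
      (2 / τ) * |T w| ^ (τ / 2 - 1) * |w| ≤ |ψ w| ∧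
      |Φ w| ≤ (|T w| ^ (τ / 2 - 1) * |w|) ^ (2 * (τ - 1) / τ) ∧
      |Φ w| ≤ (τ / 2) ^ (2 * (τ - 1) / τ) * |ψ w| ^ (2 * (τ - 1) / τ) := by
  have hτ0 : (0:ℝ) < τ := by linarith
  -- |T z| = min n |z|
  have hTabs : ∀ z : ℝ, |T z| = min n |z| := by
    intro z
    rw [hT]
    rcases le_total 0 z with hz | hz
    · rw [max_eq_right (le_min (by linarith) (by linarith)),
        abs_of_nonneg (le_min hn.le hz), abs_of_nonneg hz]
    · rw [min_eq_right (hz.trans hn.le), abs_of_nonpos hz]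
      rcases le_total (-n) z with h | h
      · rw [max_eq_right h, abs_of_nonpos hz, min_eq_right (by linarith)]
      · rw [max_eq_left h, abs_of_nonpos (by linarith : -n ≤ 0),
          min_eq_left (by linarith), neg_neg]
  have hTcont : Continuous T := by
    have hTe : T = fun z => max (-n) (min n z) := funext hT
    rw [hTe]
    exact continuous_const.max (continuous_const.min continuous_id)
  have hgcont : ∀ p : ℝ, 0 ≤ p → Continuous fun z => |T z| ^ p := fun p hp =>
    hTcont.abs.rpow_const (fun x => Or.inr hp)
  have hgnn : ∀ p : ℝ, ∀ z : ℝ, 0 ≤ |T z| ^ p := fun p z =>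
    Real.rpow_nonneg (abs_nonneg _) p
  -- evenness
  have hTeven : ∀ z : ℝ, |T (-z)| = |T z| := by
    intro z; rw [hTabs, hTabs, abs_neg]
  have hodd : ∀ p : ℝ, ∀ w : ℝ,
      (∫ z in (0:ℝ)..(-w), |T z| ^ p) = - ∫ z in (0:ℝ)..w, |T z| ^ p := by
    intro p w
    have h1 : (∫ z in (0:ℝ)..(-w), |T z| ^ p)
        = ∫ z in (0:ℝ)..(-w), |T (-z)| ^ p := by
      simp only [hTeven]
    rw [h1, intervalIntegral.integral_comp_neg (fun z => |T z| ^ p), neg_zero,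
      neg_neg, intervalIntegral.integral_symm]
  -- exact value on [0, w] with w ≤ n
  have hseg : ∀ p : ℝ, 0 ≤ p → ∀ w : ℝ, 0 ≤ w → w ≤ n →
      (∫ z in (0:ℝ)..w, |T z| ^ p) = w ^ p * w / (p + 1) := by
    intro p hp w hw hwn
    have h1 : (∫ z in (0:ℝ)..w, |T z| ^ p) = ∫ z in (0:ℝ)..w, z ^ p := by
      apply intervalIntegral.integral_congr
      intro z hz
      rw [Set.uIcc_of_le hw] at hz
      show |T z| ^ p = z ^ p
      rw [hTabs, abs_of_nonneg hz.1, min_eq_right (hz.2.trans hwn)]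
    rw [h1, integral_rpow (Or.inl (by linarith)),
      Real.zero_rpow (by positivity : p + 1 ≠ 0),
      Real.rpow_add_of_nonneg hw hp zero_le_one, Real.rpow_one]
    ring
  -- lower bound
  have hlow : ∀ p : ℝ, 0 ≤ p → ∀ w : ℝ, 0 ≤ w →
      (1/(p+1)) * (min n w) ^ p * w ≤ ∫ z in (0:ℝ)..w, |T z| ^ p := by
    intro p hp w hw
    have hp1 : (0:ℝ) < p + 1 := by linarith
    rcases le_total w n with hwn | hnw
    · rw [hseg p hp w hw hwn, min_eq_right hwn]
      apply le_of_eq; ring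
    · have hint1 : IntervalIntegrable (fun z => |T z| ^ p) MeasureTheory.volume 0 n :=
        (hgcont p hp).intervalIntegrable _ _
      have hint2 : IntervalIntegrable (fun z => |T z| ^ p) MeasureTheory.volume n w :=
        (hgcont p hp).intervalIntegrable _ _
      have hsplit : (∫ z in (0:ℝ)..w, |T z| ^ p)
          = (∫ z in (0:ℝ)..n, |T z| ^ p) + ∫ z in n..w, |T z| ^ p :=
        (intervalIntegral.integral_add_adjacent_intervals hint1 hint2).symm
      have h2 : (∫ z in n..w, |T z| ^ p) = n ^ p * (w - n) := by
        have hc : (∫ z in n..w, |T z| ^ p) = ∫ z in n..w, (n:ℝ) ^ p := by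
          apply intervalIntegral.integral_congr
          intro z hz
          rw [Set.uIcc_of_le hnw] at hz
          show |T z| ^ p = n ^ p
          rw [hTabs, abs_of_nonneg (by linarith [hz.1] : (0:ℝ) ≤ z),
            min_eq_left hz.1]
        rw [hc, intervalIntegral.integral_const, smul_eq_mul]; ring
      rw [hsplit, hseg p hp n hn.le le_rfl, h2, min_eq_left hnw]
      have hnp : (0:ℝ) ≤ n ^ p := Real.rpow_nonneg hn.le p
      have h3 : n ^ p * n / (p + 1) + n ^ p * (w - n) - 1/(p+1) * n ^ p * w
          = p * (n ^ p * (w - n)) / (p + 1) := by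
        field_simp; ring
      have h4 : (0:ℝ) ≤ p * (n ^ p * (w - n)) / (p + 1) :=
        div_nonneg (mul_nonneg hp (mul_nonneg hnp (by linarith))) hp1.le
      linarith [h3, h4]
  -- upper bound
  have hup : ∀ p : ℝ, 0 ≤ p → ∀ w : ℝ, 0 ≤ w →
      (∫ z in (0:ℝ)..w, |T z| ^ p) ≤ (min n w) ^ p * w := by
    intro p hp w hw
    have hint : IntervalIntegrable (fun z => |T z| ^ p) MeasureTheory.volume 0 w :=
      (hgcont p hp).intervalIntegrable _ _
    have hintc : IntervalIntegrable (fun _ : ℝ => (min n w) ^ p) MeasureTheory.volume 0 w :=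
      intervalIntegrable_const
    have hmono : ∀ z ∈ Set.Icc (0:ℝ) w, |T z| ^ p ≤ (min n w) ^ p := by
      intro z hz
      rw [hTabs]
      exact Real.rpow_le_rpow (le_min hn.le (abs_nonneg z))
        (min_le_min le_rfl (by rw [abs_of_nonneg hz.1]; exact hz.2)) hp
    calc (∫ z in (0:ℝ)..w, |T z| ^ p) ≤ ∫ _ in (0:ℝ)..w, (min n w) ^ p :=
          intervalIntegral.integral_mono_on hw hint hintc hmono
      _ = (min n w) ^ p * w := by
          rw [intervalIntegral.integral_const, smul_eq_mul]; ring
  -- algebra: for 0 ≤ a ≤ v, a^(τ-2) * v ≤ (a^(τ/2-1) * v)^(2(τ-1)/τ)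
  have halg : ∀ a v : ℝ, 0 ≤ a → a ≤ v →
      a ^ (τ - 2) * v ≤ (a ^ (τ/2 - 1) * v) ^ (2 * (τ - 1) / τ) := by
    intro a v ha hav
    have hv : (0:ℝ) ≤ v := ha.trans hav
    set α := 2 * (τ - 1) / τ with hα
    set β := (τ - 2) / τ with hβ
    have hq : (0:ℝ) ≤ τ/2 - 1 := by linarith
    have hα0 : (0:ℝ) ≤ α := div_nonneg (by linarith) hτ0.le
    have hβ0 : (0:ℝ) ≤ β := div_nonneg (by linarith) hτ0.le
    have hqα : (0:ℝ) ≤ (τ/2 - 1) * α := mul_nonneg hq hα0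
    have e1 : (a ^ (τ/2 - 1) * v) ^ α = a ^ ((τ/2 - 1) * α) * v ^ α := by
      rw [Real.mul_rpow (Real.rpow_nonneg ha _) hv, ← Real.rpow_mul ha]
    have e2 : a ^ (τ - 2) = a ^ ((τ/2 - 1) * α) * a ^ β := by
      rw [← Real.rpow_add_of_nonneg ha hqα hβ0]
      congr 1
      rw [hα, hβ]; field_simp; ring
    have e3 : v ^ α = v ^ β * v := by
      have : α = β + 1 := by rw [hα, hβ]; field_simp; ring
      rw [this, Real.rpow_add_of_nonneg hv hβ0 zero_le_one, Real.rpow_one]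
    rw [e1, e2, e3]
    have hle : a ^ β ≤ v ^ β := Real.rpow_le_rpow ha hav hβ0
    have h1 : a ^ β * v ≤ v ^ β * v := mul_le_mul_of_nonneg_right hle hv
    calc a ^ ((τ/2 - 1) * α) * a ^ β * v
        = a ^ ((τ/2 - 1) * α) * (a ^ β * v) := by ring
      _ ≤ a ^ ((τ/2 - 1) * α) * (v ^ β * v) :=
          mul_le_mul_of_nonneg_left h1 (Real.rpow_nonneg ha _)
  -- statement for nonnegative w, first two conjuncts
  have key : ∀ v : ℝ, 0 ≤ v →
      (2 / τ) * |T v| ^ (τ / 2 - 1) * |v| ≤ |ψ v| ∧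
      |Φ v| ≤ (|T v| ^ (τ / 2 - 1) * |v|) ^ (2 * (τ - 1) / τ) := by
    intro v hv
    have hTv : |T v| = min n v := by rw [hTabs, abs_of_nonneg hv]
    have hq : (0:ℝ) ≤ τ/2 - 1 := by linarith
    have hp : (0:ℝ) ≤ τ - 2 := by linarith
    have habsv : |v| = v := abs_of_nonneg hv
    have hψnn : 0 ≤ ψ v := by
      rw [hψ]
      exact intervalIntegral.integral_nonneg hv (fun x _ => hgnn _ x)
    have hΦnn : 0 ≤ Φ v := by
      rw [hΦ]
      exact intervalIntegral.integral_nonneg hv (fun x _ => hgnn _ x)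
    constructor
    · rw [abs_of_nonneg hψnn, hψ, hTv, habsv]
      have := hlow (τ/2 - 1) hq v hv
      have h21 : 2/τ = 1/((τ/2 - 1) + 1) := by field_simp; ring
      rw [h21]
      convert this using 3
    · rw [abs_of_nonneg hΦnn, hΦ, hTv, habsv]
      calc (∫ z in (0:ℝ)..v, |T z| ^ (τ - 2)) ≤ (min n v) ^ (τ - 2) * v :=
            hup _ hp v hv
        _ ≤ ((min n v) ^ (τ/2 - 1) * v) ^ (2 * (τ - 1) / τ) :=
            halg (min n v) v (le_min hn.le hv) (min_le_right _ _)
  -- first two conjuncts, all w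
  have main12 : ∀ w : ℝ,
      (2 / τ) * |T w| ^ (τ / 2 - 1) * |w| ≤ |ψ w| ∧
      |Φ w| ≤ (|T w| ^ (τ / 2 - 1) * |w|) ^ (2 * (τ - 1) / τ) := by
    intro w
    rcases le_total 0 w with hw | hw
    · exact key w hw
    · have hw' : (0:ℝ) ≤ -w := by linarith
      have hψeq : |ψ w| = |ψ (-w)| := by
        rw [hψ, hψ, show w = -(-w) by ring, hodd, abs_neg, neg_neg]
      have hΦeq : |Φ w| = |Φ (-w)| := by
        rw [hΦ, hΦ, show w = -(-w) by ring, hodd, abs_neg, neg_neg]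
      have hTeq : |T w| = |T (-w)| := (hTeven w).symm
      have habs : |w| = |(-w)| := (abs_neg w).symm
      rw [hψeq, hΦeq, hTeq, habs]
      exact key (-w) hw'
  intro w
  obtain ⟨h1, h2⟩ := main12 w
  refine ⟨h1, h2, ?_⟩
  -- third conjunct
  have hα0 : (0:ℝ) ≤ 2 * (τ - 1) / τ := div_nonneg (by linarith) hτ0.le
  have hxnn : (0:ℝ) ≤ |T w| ^ (τ / 2 - 1) * |w| :=
    mul_nonneg (Real.rpow_nonneg (abs_nonneg _) _) (abs_nonneg _)
  have hx : |T w| ^ (τ / 2 - 1) * |w| ≤ (τ/2) * |ψ w| := by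
    have h := mul_le_mul_of_nonneg_left h1 (by linarith : (0:ℝ) ≤ τ/2)
    calc |T w| ^ (τ / 2 - 1) * |w|
        = (τ/2) * ((2/τ) * |T w| ^ (τ / 2 - 1) * |w|) := by
          field_simp
      _ ≤ (τ/2) * |ψ w| := h
  calc |Φ w| ≤ (|T w| ^ (τ / 2 - 1) * |w|) ^ (2 * (τ - 1) / τ) := h2
    _ ≤ ((τ/2) * |ψ w|) ^ (2 * (τ - 1) / τ) :=
        Real.rpow_le_rpow hxnn hx hα0
    _ = (τ / 2) ^ (2 * (τ - 1) / τ) * |ψ w| ^ (2 * (τ - 1) / τ) :=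
        Real.mul_rpow (by linarith) (abs_nonneg _)
end
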